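/- arXiv:1912.06978 — 2 statements merged into one kernel-verified Lean document; each statement's English description precedes it below -/
import Mathlib

section
/- Let X ⊆ ℝⁿ be a nonempty compact convex polytope given as the intersection of m closed half-spaces, X = ⋂_{i=1}^{m} {x ∈ ℝⁿ : ⟨aᵢ, x⟩ ≤ bᵢ}, where each aᵢ ∈ ℝⁿ is nonzero and bᵢ ∈ ℝ. Then there exist zonotopes Z₁, …, Z_m ⊆ ℝⁿ (at most m of them) such that X = ⋂_{i=1}^{m} Zᵢ; i.e., X can be exactly represented as the intersection of at most m zonotopic sets. -/
open scoped RealInnerProductSpace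

/-- A zonotope in `ℝⁿ`: a set of the form
`{p + ∑ i, s i • g i : s ∈ ℝᵏ, |s i| ≤ 1 for all i}`
for some center `p` and finitely many generators `g i`. -/
def IsZonotope {n : ℕ} (Z : Set (EuclideanSpace ℝ (Fin n))) : Prop :=
  ∃ (k : ℕ) (p : EuclideanSpace ℝ (Fin n)) (g : Fin k → EuclideanSpace ℝ (Fin n)),
    Z = {x | ∃ s : Fin k → ℝ, (∀ i, |s i| ≤ 1) ∧ x = p + ∑ i, s i • g i}

/-- An axis-aligned box with respect to an orthonormal basis is a zonotope. -/
lemma box_isZonotope {n : ℕ} (bb : OrthonormalBasis (Fin n) ℝ (EuclideanSpace ℝ (Fin n)))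
    (c r : Fin n → ℝ) (hr : ∀ j, 0 ≤ r j) :
    IsZonotope {x : EuclideanSpace ℝ (Fin n) | ∀ j, |⟪bb j, x⟫ - c j| ≤ r j} := by
  classical
  refine ⟨n, ∑ j, c j • bb j, fun j => r j • bb j, ?_⟩
  ext x
  simp only [Set.mem_setOf_eq]
  constructor
  · intro hx
    refine ⟨fun j => if r j = 0 then 0 else (⟪bb j, x⟫ - c j) / r j, ?_, ?_⟩
    · intro j
      by_cases h : r j = 0
      · simp [h]
      · have hrj : 0 < r j := lt_of_le_of_ne (hr j) (Ne.symm h)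
        simp only [h, if_false]
        rw [abs_div, abs_of_pos hrj, div_le_one hrj]
        exact hx j
    · have key : ∀ j, (if r j = 0 then (0:ℝ) else (⟪bb j, x⟫ - c j) / r j) • (r j • bb j)
          = (⟪bb j, x⟫ - c j) • bb j := by
        intro j
        by_cases h : r j = 0
        · have h0 : ⟪bb j, x⟫ - c j = 0 := by
            have := hx j; rw [h] at this; exact abs_nonpos_iff.mp this
          rw [if_pos h, zero_smul, h0, zero_smul]
        · rw [if_neg h, smul_smul, div_mul_cancel₀ _ h]
      calc x = ∑ j, ⟪bb j, x⟫ • bb j := (bb.sum_repr' x).symm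
        _ = ∑ j, (c j • bb j + (⟪bb j, x⟫ - c j) • bb j) :=
            Finset.sum_congr rfl (fun j _ => by rw [← add_smul, add_sub_cancel])
        _ = (∑ j, c j • bb j) + ∑ j, (⟪bb j, x⟫ - c j) • bb j := Finset.sum_add_distrib
        _ = (∑ j, c j • bb j)
            + ∑ j, (if r j = 0 then (0:ℝ) else (⟪bb j, x⟫ - c j) / r j) • (r j • bb j) := by
            rw [Finset.sum_congr rfl (fun j _ => (key j).symm)]
  · rintro ⟨s, hs, rfl⟩
    intro j
    have hval : ⟪bb j, (∑ j, c j • bb j) + ∑ i, s i • (r i • bb i)⟫ = c j + s j * r j := by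
      rw [inner_add_right]
      have h1 : ⟪bb j, ∑ j, c j • bb j⟫ = c j := bb.orthonormal.inner_right_fintype c j
      have h2 : ⟪bb j, ∑ i, (s i * r i) • bb i⟫ = s j * r j :=
        bb.orthonormal.inner_right_fintype (fun i => s i * r i) j
      simp only [smul_smul] at *
      rw [h1, h2]
    rw [hval]
    have : |s j * r j| ≤ r j := by
      rw [abs_mul, abs_of_nonneg (hr j)]
      calc |s j| * r j ≤ 1 * r j := mul_le_mul_of_nonneg_right (hs j) (hr j)
        _ = r j := one_mul _
    simpa using this

/-- A nonempty compact convex polytope `X ⊆ ℝⁿ`, given as the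
intersection of `m` closed half-spaces `{x : ⟪aᵢ, x⟫ ≤ bᵢ}` with `aᵢ ≠ 0`, can be
exactly represented as the intersection of at most `m` zonotopes. -/
theorem polytope_eq_iInter_zonotopes {n m : ℕ} (hm : 1 ≤ m)
    (a : Fin m → EuclideanSpace ℝ (Fin n)) (b : Fin m → ℝ)
    (ha : ∀ i, a i ≠ 0)
    (X : Set (EuclideanSpace ℝ (Fin n)))
    (hX : X = ⋂ i : Fin m, {x : EuclideanSpace ℝ (Fin n) | ⟪a i, x⟫ ≤ b i})
    (hne : X.Nonempty) (hcomp : IsCompact X) :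
    ∃ Z : Fin m → Set (EuclideanSpace ℝ (Fin n)),
      (∀ i, IsZonotope (Z i)) ∧ X = ⋂ i : Fin m, Z i := by
  classical
  obtain _ | n := n
  · exact absurd (Subsingleton.elim _ _) (ha ⟨0, hm⟩)
  obtain ⟨R₀, hR₀⟩ := hcomp.isBounded.subset_closedBall 0
  set R : ℝ := max R₀ 0 with hRdef
  have hR : ∀ x ∈ X, ‖x‖ ≤ R := by
    intro x hx
    have := hR₀ hx
    rw [Metric.mem_closedBall, dist_zero_right] at this
    exact this.trans (le_max_left _ _)
  have hR0 : (0:ℝ) ≤ R := le_max_right _ _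
  have key : ∀ i : Fin m, ∃ Zi : Set (EuclideanSpace ℝ (Fin (n+1))),
      IsZonotope Zi ∧ X ⊆ Zi ∧ Zi ⊆ {x | ⟪a i, x⟫ ≤ b i} := by
    intro i
    set u : EuclideanSpace ℝ (Fin (n+1)) := ‖a i‖⁻¹ • a i with hu
    have hai : ‖a i‖ ≠ 0 := norm_ne_zero_iff.mpr (ha i)
    have hai' : (0:ℝ) < ‖a i‖ := norm_pos_iff.mpr (ha i)
    have hun : ‖u‖ = 1 := by
      rw [hu, norm_smul, norm_inv, norm_norm, inv_mul_cancel₀ hai]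
    have huu : ⟪u, u⟫ = 1 := by
      rw [real_inner_self_eq_norm_mul_norm, hun]; norm_num
    have horth : Orthonormal ℝ (({0} : Set (Fin (n+1))).restrict (fun _ => u)) := by
      rw [orthonormal_iff_ite]
      rintro ⟨j, hj⟩ ⟨k, hk⟩
      simp only [Set.mem_singleton_iff] at hj hk
      subst hj; subst hk
      rw [if_pos rfl]
      exact huu
    obtain ⟨bb, hbb⟩ := horth.exists_orthonormalBasis_extension_of_card_eq
      (by simp [finrank_euclideanSpace]) 
    have hbb0 : bb 0 = u := hbb 0 rfl
    set B : ℝ := b i / ‖a i‖ with hB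
    set c : Fin (n+1) → ℝ := Fin.cons ((B - R) / 2) (fun _ => 0) with hc
    set r : Fin (n+1) → ℝ := Fin.cons ((B + R) / 2) (fun _ => R) with hrr
    have hBR : -R ≤ B := by
      obtain ⟨x0, hx0⟩ := hne
      have h1 : ⟪a i, x0⟫ ≤ b i := by
        rw [hX] at hx0
        exact Set.mem_iInter.mp hx0 i
      have h2 : |⟪u, x0⟫| ≤ R := by
        calc |⟪u, x0⟫| ≤ ‖u‖ * ‖x0‖ := abs_real_inner_le_norm _ _
          _ = ‖x0‖ := by rw [hun, one_mul]
          _ ≤ R := hR x0 hx0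
      have h3 : ⟪u, x0⟫ ≤ B := by
        rw [hu, real_inner_smul_left, hB, div_eq_inv_mul]
        exact mul_le_mul_of_nonneg_left h1 (by positivity)
      have := (abs_le.mp h2).1
      linarith
    have hrpos : ∀ j, 0 ≤ r j := by
      intro j
      induction j using Fin.cases with
      | zero => rw [hrr, Fin.cons_zero]; linarith
      | succ k => rw [hrr, Fin.cons_succ]; exact hR0
    refine ⟨{x | ∀ j, |⟪bb j, x⟫ - c j| ≤ r j}, box_isZonotope bb c r hrpos, ?_, ?_⟩
    · intro x hx j
      have hnx : ‖x‖ ≤ R := hR x hx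
      have habs : |⟪bb j, x⟫| ≤ R := by
        calc |⟪bb j, x⟫| ≤ ‖bb j‖ * ‖x‖ := abs_real_inner_le_norm _ _
          _ = ‖x‖ := by rw [bb.orthonormal.1 j, one_mul]
          _ ≤ R := hnx
      induction j using Fin.cases with
      | zero =>
        have hub : ⟪bb 0, x⟫ ≤ B := by
          rw [hbb0, hu, real_inner_smul_left, hB, div_eq_inv_mul]
          have h1 : ⟪a i, x⟫ ≤ b i := by
            rw [hX] at hx
            exact Set.mem_iInter.mp hx i
          exact mul_le_mul_of_nonneg_left h1 (by positivity)
        have hlb : -R ≤ ⟪bb 0, x⟫ := (abs_le.mp habs).1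
        rw [hc, hrr, Fin.cons_zero, Fin.cons_zero, abs_le]
        constructor <;> linarith
      | succ k =>
        rw [hc, hrr, Fin.cons_succ, Fin.cons_succ, sub_zero]
        exact habs
    · intro x hx
      have h0 := hx 0
      rw [hc, hrr, Fin.cons_zero, Fin.cons_zero] at h0
      have hub : ⟪bb 0, x⟫ ≤ B := by
        have := (abs_le.mp h0).2
        linarith
      rw [hbb0, hu, real_inner_smul_left] at hub
      have hle : ⟪a i, x⟫ ≤ ‖a i‖ * B := by
        calc ⟪a i, x⟫ = ‖a i‖ * (‖a i‖⁻¹ * ⟪a i, x⟫) := by field_simp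
          _ ≤ ‖a i‖ * B := mul_le_mul_of_nonneg_left hub (le_of_lt hai')
      rw [hB] at hle
      rw [Set.mem_setOf_eq]
      calc ⟪a i, x⟫ ≤ ‖a i‖ * (b i / ‖a i‖) := hle
        _ = b i := by field_simp
  choose Z hZzon hZsub hZhalf using key
  refine ⟨Z, hZzon, ?_⟩
  apply Set.Subset.antisymm
  · exact Set.subset_iInter hZsub
  · intro x hx
    rw [hX]
    exact Set.mem_iInter.mpr fun i => hZhalf i (Set.mem_iInter.mp hx i)
end

section
/- Let f : ℝ^{n_x} × ℝ^{n_u} → ℝ^{n_x} and g : ℝ^{n_x} × ℝ^{n_u} → ℝ^{n_x × n_v} be maps, D ⊆ ℝ^{n_x} a set, H ≥ 1 an integer, and let (x_l)_{0 ≤ l ≤ H}, (u_l)_{0 ≤ l ≤ H−1}, (v_l)_{0 ≤ l ≤ H−1}, (d_l)_{0 ≤ l ≤ H−1} satisfy the dynamics x_{l+1} = f(x_l, u_l) + g(x_l, u_l) v_l + d_l with d_l ∈ D for all 0 ≤ l ≤ H−1. Suppose sets V̂_l ⊆ ℝ^{n_v} satisfy v_l ∈ V̂_l for each 0 ≤ l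 ≤ H−1, and sets X̂_l ⊆ ℝ^{n_x} satisfy x_0 ∈ X̂_0 and the over-approximation property X̂_{l+1} ⊇ {f(x, u_l) + g(x, u_l) v + d : x ∈ X̂_l, v ∈ V̂_l, d ∈ D} for all 0 ≤ l ≤ H−2. Then x_l ∈ X̂_l for all 0 ≤ l ≤ H−1, and consequently the parameter v_{H−1} used at the last step belongs to the approximated information set L̂ = {v ∈ ℝ^{n_v} : ∃ x ∈ X̂_{H−1}, x_H − f(x, u_{H−1}) − g(x, u_{H−1}) v ∈ D}. -/
/-- Soundness of the reachable-set over-approximation under the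
self-triggering mechanism: if the trajectory satisfies
`x_{l+1} = f(x_l,u_l) + g(x_l,u_l) v_l + d_l` with `d_l ∈ D` and `v_l ∈ V̂_l` for
`0 ≤ l ≤ H−1`, `x_0 ∈ X̂_0`, and the sets `X̂_l` satisfy the over-approximation
property `X̂_{l+1} ⊇ {f(x,u_l) + g(x,u_l) v + d : x ∈ X̂_l, v ∈ V̂_l, d ∈ D}` for
`0 ≤ l ≤ H−2`, then `x_l ∈ X̂_l` for all `0 ≤ l ≤ H−1`, and the true parameter
`v_{H−1}` belongs to the approximated information set
`L̂ = {v : ∃ x ∈ X̂_{H−1}, x_H − f(x,u_{H−1}) − g(x,u_{H−1}) v ∈ D}`. -/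
theorem reachable_set_estimation_sound {nx nu nv : ℕ}
    (f : (Fin nx → ℝ) → (Fin nu → ℝ) → (Fin nx → ℝ))
    (g : (Fin nx → ℝ) → (Fin nu → ℝ) → Matrix (Fin nx) (Fin nv) ℝ)
    (D : Set (Fin nx → ℝ)) (H : ℕ) (hH : 1 ≤ H)
    (x : ℕ → Fin nx → ℝ) (u : ℕ → Fin nu → ℝ)
    (v : ℕ → Fin nv → ℝ) (d : ℕ → Fin nx → ℝ)
    (hd : ∀ l < H, d l ∈ D)
    (hdyn : ∀ l < H, x (l + 1) = f (x l) (u l) + (g (x l) (u l)).mulVec (v l) + d l)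
    (Vhat : ℕ → Set (Fin nv → ℝ))
    (hV : ∀ l < H, v l ∈ Vhat l)
    (Xhat : ℕ → Set (Fin nx → ℝ))
    (hX0 : x 0 ∈ Xhat 0)
    (hXrec : ∀ l, l + 2 ≤ H →
      {z | ∃ xx ∈ Xhat l, ∃ vv ∈ Vhat l, ∃ dd ∈ D,
        z = f xx (u l) + (g xx (u l)).mulVec vv + dd} ⊆ Xhat (l + 1)) :
    (∀ l < H, x l ∈ Xhat l) ∧
    v (H - 1) ∈ {w | ∃ xx ∈ Xhat (H - 1),
      x H - f xx (u (H - 1)) - (g xx (u (H - 1))).mulVec w ∈ D} := by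
  have key : ∀ l < H, x l ∈ Xhat l := by
    intro l
    induction l with
    | zero => intro _; exact hX0
    | succ n ih =>
      intro hn
      apply hXrec n (by omega)
      exact ⟨x n, ih (by omega), v n, hV n (by omega), d n, hd n (by omega),
        hdyn n (by omega)⟩
  refine ⟨key, x (H - 1), key (H - 1) (by omega), ?_⟩
  have h1 : H - 1 < H := by omega
  have h2 : H - 1 + 1 = H := by omega
  have := hdyn (H - 1) h1
  rw [h2] at this
  rw [this]
  have : f (x (H-1)) (u (H-1)) + (g (x (H-1)) (u (H-1))).mulVec (v (H-1)) + d (H-1)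
      - f (x (H-1)) (u (H-1)) - (g (x (H-1)) (u (H-1))).mulVec (v (H-1)) = d (H-1) := by
    abel
  rw [this]
  exact hd (H - 1) h1
end
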